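/- arXiv:0804.4264 — 2 statements merged into one kernel-verified Lean document; each statement's English description precedes it below -/
import Mathlib

section
/- Let m ≥ 5 and let π: G1 → A_m be a minimal cover of finite groups. Then the only subgroup of G1 of index strictly less than m is G1 itself. -/
open Equiv Equiv.Perm Subgroup

private lemma aux_nontrivial_fin (m : ℕ) (hm : 5 ≤ m) : Nontrivial (Fin m) :=
  ⟨⟨⟨0, by omega⟩, ⟨1, by omega⟩, by simp [Fin.ext_iff]⟩⟩

/-- Counting: the normal core of a small-index subgroup of `A_m` is nontrivial. -/
private lemma aux_normalCore_ne_bot (m : ℕ) (hm : 5 ≤ m)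
    (K : Subgroup (alternatingGroup (Fin m))) (h : K.index < m) :
    K.normalCore ≠ ⊥ := by
  have hnt := aux_nontrivial_fin m hm
  intro hbot
  have hker : (MulAction.toPermHom (alternatingGroup (Fin m))
      (alternatingGroup (Fin m) ⧸ K)).ker = ⊥ := by
    rw [← Subgroup.normalCore_eq_ker, hbot]
  have hinj := (MonoidHom.ker_eq_bot_iff _).mp hker
  have h1 : Nat.card (alternatingGroup (Fin m)) ≤
      Nat.card (Perm (alternatingGroup (Fin m) ⧸ K)) :=
    Nat.card_le_card_of_injective _ hinj
  have h2 : Nat.card (Perm (alternatingGroup (Fin m) ⧸ K)) = Nat.factorial K.index := by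
    have : Fintype (alternatingGroup (Fin m) ⧸ K) := Fintype.ofFinite _
    have : DecidableEq (alternatingGroup (Fin m) ⧸ K) := Classical.decEq _
    rw [Nat.card_eq_fintype_card, Fintype.card_perm, Subgroup.index,
      Nat.card_eq_fintype_card]
  have h3 : 2 * Nat.card (alternatingGroup (Fin m)) = Nat.factorial m := by
    rw [Nat.card_eq_fintype_card, two_mul_card_alternatingGroup, Fintype.card_perm,
      Fintype.card_fin]
  have h4 : Nat.factorial K.index ≤ Nat.factorial (m-1) := Nat.factorial_le (by omega)
  have h5 : Nat.factorial m = m * Nat.factorial (m-1) := by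
    conv_lhs => rw [show m = (m - 1) + 1 by omega]
    rw [Nat.factorial_succ]; congr 1; omega
  have h6 : 0 < Nat.factorial (m-1) := Nat.factorial_pos _
  nlinarith [h1, h2, h3, h4, h5, h6]


/-- Commutator trick: a nontrivial permutation yields a nontrivial commutator with a
3-cycle, supported on at most 5 points. -/
private lemma aux_commutator (m : ℕ) (hm : 5 ≤ m) (σ : Perm (Fin m)) (hσ : σ ≠ 1) :
    ∃ (τ : Perm (Fin m)) (T : Finset (Fin m)),
      IsThreeCycle τ ∧ σ * τ * σ⁻¹ * τ⁻¹ ≠ 1 ∧ T.card ≤ 5 ∧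
      ∀ x ∉ T, (σ * τ * σ⁻¹ * τ⁻¹) x = x := by
  -- find a moved point
  have : ∃ a, σ a ≠ a := by
    by_contra hc
    push_neg at hc
    exact hσ (Equiv.ext fun x => by rw [hc x, Perm.one_apply])
  obtain ⟨a, ha⟩ := this
  set b := σ a with hb
  have hab : a ≠ b := Ne.symm ha
  -- find c avoiding a, b, σ b, σ⁻¹ a
  have hcard : ({a, b, σ b, σ⁻¹ a} : Finset (Fin m)).card < Fintype.card (Fin m) := by
    have h1 : ({a, b, σ b, σ⁻¹ a} : Finset (Fin m)).card ≤ 4 := by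
      apply le_trans (Finset.card_insert_le _ _)
      have h2 : ({b, σ b, σ⁻¹ a} : Finset (Fin m)).card ≤ 3 := by
        apply le_trans (Finset.card_insert_le _ _)
        have h3 : ({σ b, σ⁻¹ a} : Finset (Fin m)).card ≤ 2 := by
          apply le_trans (Finset.card_insert_le _ _)
          simp
        omega
      omega
    simp only [Fintype.card_fin]
    omega
  have hcompl : (({a, b, σ b, σ⁻¹ a} : Finset (Fin m))ᶜ).Nonempty := by
    rw [← Finset.card_pos, Finset.card_compl]
    omega
  obtain ⟨c, hc⟩ := hcompl
  rw [Finset.mem_compl] at hc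
  simp only [Finset.mem_insert, Finset.mem_singleton, not_or] at hc
  obtain ⟨hca, hcb, hcσb, hcσa⟩ := hc
  have hσca : σ c ≠ a := fun h => hcσa (by rw [← h, Perm.coe_inv, Equiv.symm_apply_apply])
  set τ : Perm (Fin m) := Equiv.swap a b * Equiv.swap a c with hτ
  have h3c : IsThreeCycle τ :=
    isThreeCycle_swap_mul_swap_same hab (Ne.symm hca) (fun h => hcb h.symm)
  have hτa : τ a = c := by
    simp [hτ, Perm.mul_apply, Equiv.swap_apply_left,
      Equiv.swap_apply_of_ne_of_ne hca hcb]
  have hτb : τ b = a := by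
    simp [hτ, Perm.mul_apply,
      Equiv.swap_apply_of_ne_of_ne (Ne.symm hab) (fun h => hcb h.symm),
      Equiv.swap_apply_right]
  refine ⟨τ, {a, b, c, σ b, σ c}, h3c, ?_, ?_, ?_⟩
  · -- nontrivial commutator
    intro h1
    have h2 : σ * τ * σ⁻¹ = τ := mul_inv_eq_one.mp h1
    have h3 := congrArg (fun f : Perm (Fin m) => f b) h2
    simp only [Perm.mul_apply] at h3
    rw [hb, Perm.coe_inv, Equiv.symm_apply_apply, hτa, hτb] at h3
    exact hσca h3
  · -- card
    apply le_trans (Finset.card_insert_le _ _)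
    apply Nat.succ_le_succ
    apply le_trans (Finset.card_insert_le _ _)
    apply Nat.succ_le_succ
    apply le_trans (Finset.card_insert_le _ _)
    apply Nat.succ_le_succ
    apply le_trans (Finset.card_insert_le _ _)
    simp
  · -- fixes points outside
    intro x hx
    simp only [Finset.mem_insert, Finset.mem_singleton, not_or] at hx
    obtain ⟨hxa, hxb, hxc, hxσb, hxσc⟩ := hx
    have hτinvx : τ⁻¹ x = x := by
      rw [Perm.inv_eq_iff_eq]
      simp [hτ, Perm.mul_apply, Equiv.swap_apply_of_ne_of_ne hxa hxc,
        Equiv.swap_apply_of_ne_of_ne hxa hxb]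
    have hσinva : σ⁻¹ x ≠ a := fun h => hxb (by
      rw [Perm.inv_eq_iff_eq] at h; rw [hb]; exact h)
    have hσinvb : σ⁻¹ x ≠ b := fun h => hxσb (by rw [Perm.inv_eq_iff_eq] at h; rw [h])
    have hσinvc : σ⁻¹ x ≠ c := fun h => hxσc (by rw [Perm.inv_eq_iff_eq] at h; rw [h])
    have hτσinv : τ (σ⁻¹ x) = σ⁻¹ x := by
      simp only [hτ, Perm.mul_apply, Equiv.swap_apply_of_ne_of_ne hσinva hσinvc,
        Equiv.swap_apply_of_ne_of_ne hσinva hσinvb]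
    simp only [Perm.mul_apply, hτinvx, hτσinv]; exact Equiv.apply_symm_apply _ _


/-- A normal subgroup of `A_m` containing a nontrivial element supported on 5 points
is everything. -/
private lemma aux_normal_top (m : ℕ) (hm : 5 ≤ m) (N : Subgroup (alternatingGroup (Fin m)))
    (hN : N.Normal) (ρ' : alternatingGroup (Fin m)) (hρN : ρ' ∈ N) (hρ1 : ρ' ≠ 1)
    (T : Finset (Fin m)) (hT : T.card = 5)
    (hfix : ∀ x ∉ T, (ρ' : Perm (Fin m)) x = x) :
    N = ⊤ := by
  set ρ : Perm (Fin m) := (ρ' : Perm (Fin m)) with hρdef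
  have hρne : ρ ≠ 1 := fun h => hρ1 (Subtype.ext h)
  -- the equivalence of `Fin 5` with `T`
  set e' : Fin 5 ≃ {x : Fin m // x ∈ T} := ((T.equivFin).trans (finCongr hT)).symm with he'
  -- invariance of `T`
  have hmemT : ∀ x, x ∈ T ↔ ρ x ∈ T := by
    intro x
    constructor
    · intro hx
      by_contra hρx
      have h1 : ρ (ρ x) = ρ x := hfix _ hρx
      have h2 : ρ x = x := ρ.injective h1
      rw [h2] at hρx
      exact hρx hx
    · intro hρx
      by_contra hx
      rw [hfix x hx] at hρx
      exact hx hρx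
  set ρ₀ : Perm (Fin 5) := (Equiv.permCongr e').symm (ρ.subtypePerm fun x => (hmemT x).symm) with hρ₀
  have hExt : ρ₀.extendDomain e' = ρ := by
    ext x
    by_cases hx : x ∈ T
    · rw [Perm.extendDomain_apply_subtype _ _ hx]
      simp [hρ₀, Equiv.permCongr_apply, Perm.subtypePerm_apply]
    · rw [Perm.extendDomain_apply_not_subtype _ _ hx, hfix x hx]
  have hsignρ : Perm.sign ρ = 1 := Perm.mem_alternatingGroup.mp ρ'.2
  have hρ₀mem : ρ₀ ∈ alternatingGroup (Fin 5) := by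
    rw [Perm.mem_alternatingGroup]
    have := Perm.sign_extendDomain ρ₀ e'
    rw [hExt] at this
    rw [← this, hsignρ]
  have hρ₀ne : ρ₀ ≠ 1 := by
    intro h
    rw [h, Perm.extendDomain_one] at hExt
    exact hρne hExt.symm
  set x₀ : alternatingGroup (Fin 5) := ⟨ρ₀, hρ₀mem⟩ with hx₀def
  have hx₀ne : x₀ ≠ 1 := fun h => hρ₀ne (congrArg Subtype.val h)
  -- normal closure of x₀ is everything, by simplicity of A₅
  have hclo : Subgroup.normalClosure ({x₀} : Set (alternatingGroup (Fin 5))) = ⊤ := by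
    rcases (Subgroup.normalClosure_normal (s := ({x₀} : Set (alternatingGroup (Fin 5))))).eq_bot_or_eq_top with h | h
    · exfalso
      have := Subgroup.subset_normalClosure (s := ({x₀} : Set (alternatingGroup (Fin 5))))
        (Set.mem_singleton x₀)
      rw [h] at this
      exact hx₀ne (Subgroup.mem_bot.mp this)
    · exact h
  -- the embedding homomorphism into A_m
  have hΨmem : ∀ g : alternatingGroup (Fin 5),
      Perm.extendDomain (g : Perm (Fin 5)) e' ∈ alternatingGroup (Fin m) := by
    intro g
    rw [Perm.mem_alternatingGroup, Perm.sign_extendDomain]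
    exact Perm.mem_alternatingGroup.mp g.2
  set Ψ : alternatingGroup (Fin 5) →* alternatingGroup (Fin m) :=
    MonoidHom.codRestrict ((Perm.extendDomainHom e').comp
      (alternatingGroup (Fin 5)).subtype) _ hΨmem with hΨdef
  haveI : (N.comap Ψ).Normal := hN.comap Ψ
  have hle : Subgroup.normalClosure ({x₀} : Set (alternatingGroup (Fin 5))) ≤ N.comap Ψ := by
    apply Subgroup.normalClosure_le_normal
    rw [Set.singleton_subset_iff]
    show Ψ x₀ ∈ N
    have : Ψ x₀ = ρ' := Subtype.ext hExt
    rw [this]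
    exact hρN
  -- a 3-cycle in the image
  set τ₅ : Perm (Fin 5) := Equiv.swap 0 1 * Equiv.swap 0 2 with hτ₅
  have h3c₅ : IsThreeCycle τ₅ :=
    isThreeCycle_swap_mul_swap_same (by decide) (by decide) (by decide)
  set τ₅' : alternatingGroup (Fin 5) := ⟨τ₅, h3c₅.mem_alternatingGroup⟩ with hτ₅'
  have hτN : Ψ τ₅' ∈ N := by
    have : τ₅' ∈ Subgroup.normalClosure ({x₀} : Set (alternatingGroup (Fin 5))) := by
      rw [hclo]; exact mem_top _
    exact hle this
  have h3cm : IsThreeCycle (τ₅.extendDomain e') := by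
    unfold Equiv.Perm.IsThreeCycle
    rw [cycleType_extendDomain]
    exact h3c₅
  have htop : Subgroup.normalClosure
      ({⟨τ₅.extendDomain e', h3cm.mem_alternatingGroup⟩} :
        Set (alternatingGroup (Fin m))) = ⊤ :=
    h3cm.alternating_normalClosure (by rw [Nat.card_eq_fintype_card, Fintype.card_fin]; omega)
  rw [eq_top_iff, ← htop]
  apply Subgroup.normalClosure_le_normal
  rw [Set.singleton_subset_iff]
  exact hτN


/-- Every subgroup of `A_m` (`m ≥ 5`) of index less than `m` is the whole group. -/
private lemma aux_alt_index (m : ℕ) (hm : 5 ≤ m)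
    (K : Subgroup (alternatingGroup (Fin m))) (h : K.index < m) : K = ⊤ := by
  have hcore := aux_normalCore_ne_bot m hm K h
  obtain ⟨ρ'', hρ''N, hρ''1⟩ :
      ∃ x ∈ K.normalCore, x ≠ (1 : alternatingGroup (Fin m)) := by
    rcases K.normalCore.bot_or_exists_ne_one with h' | h'
    · exact absurd h' hcore
    · exact h'
  have hσ : (ρ'' : Perm (Fin m)) ≠ 1 := fun h' => hρ''1 (Subtype.ext h')
  obtain ⟨τ, T, h3c, hne, hTcard, hfix⟩ := aux_commutator m hm (ρ'' : Perm (Fin m)) hσ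
  -- the commutator as an element of the normal core
  set τ' : alternatingGroup (Fin m) := ⟨τ, h3c.mem_alternatingGroup⟩ with hτ'
  set γ : alternatingGroup (Fin m) := ρ'' * τ' * ρ''⁻¹ * τ'⁻¹ with hγ
  have hγval : (γ : Perm (Fin m)) =
      (ρ'' : Perm (Fin m)) * τ * (ρ'' : Perm (Fin m))⁻¹ * τ⁻¹ := rfl
  have hγN : γ ∈ K.normalCore := by
    have h1 : τ' * ρ''⁻¹ * τ'⁻¹ ∈ K.normalCore :=
      K.normalCore_normal.conj_mem _ (inv_mem hρ''N) τ'
    have : γ = ρ'' * (τ' * ρ''⁻¹ * τ'⁻¹) := by rw [hγ]; group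
    rw [this]
    exact mul_mem hρ''N h1
  have hγ1 : γ ≠ 1 := by
    intro h'
    apply hne
    rw [← hγval, h']
    rfl
  obtain ⟨T', hTT', hT'card⟩ := Finset.exists_superset_card_eq hTcard
    (by rw [Fintype.card_fin]; omega)
  have hfix' : ∀ x ∉ T', (γ : Perm (Fin m)) x = x := by
    intro x hx
    exact hfix x (fun hmem => hx (hTT' hmem))
  have hNtop := aux_normal_top m hm K.normalCore K.normalCore_normal γ hγN hγ1 T'
    hT'card hfix'
  rw [eq_top_iff, ← hNtop]
  exact K.normalCore_le

theorem minimal_cover_of_alternating_no_small_index_subgroup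
    (m : ℕ) (hm : 5 ≤ m) {G1 : Type*} [Group G1] [Finite G1]
    (π : G1 →* alternatingGroup (Fin m)) (hsurj : Function.Surjective π)
    (hmin : ∀ H : Subgroup G1, Subgroup.map π H = ⊤ → H = ⊤)
    (H : Subgroup G1) (h : H.index < m) :
    H = ⊤ := by
  apply hmin
  apply aux_alt_index m hm
  have hdvd : (H.map π).index ∣ H.index := H.index_map_dvd hsurj
  have hpos : 0 < H.index := Nat.pos_of_ne_zero H.index_ne_zero_of_finite
  exact lt_of_le_of_lt (Nat.le_of_dvd hpos hdvd) h
end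

section
/- Let K be a field, n ≥ 7, h(x) ∈ K[x] an irreducible separable polynomial of degree n−1 whose Galois group over K, viewed as a permutation group of its root set R_h, is either the full symmetric group or the alternating group on R_h. Then the only fractional-linear transformation U ∈ PGL_2(K̄) with U(R_h) = R_h is the identity. -/
open scoped Classical

theorem Equiv.Perm.apply_inv_self {α : Type*} (f : Equiv.Perm α) (x : α) : f (f⁻¹ x) = x :=
  f.apply_symm_apply x

theorem Equiv.Perm.inv_apply_self {α : Type*} (f : Equiv.Perm α) (x : α) : f⁻¹ (f x) = x :=
  f.symm_apply_apply x

section MobiusAux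

variable {F : Type*} [Field F]

private lemma quad_roots3 {c d a b x y z : F} (hxy : x ≠ y) (hxz : x ≠ z) (hyz : y ≠ z)
    (hx : c * x ^ 2 + (d - a) * x - b = 0)
    (hy : c * y ^ 2 + (d - a) * y - b = 0)
    (hz : c * z ^ 2 + (d - a) * z - b = 0) :
    c = 0 ∧ b = 0 ∧ a = d := by
  have h1 : c * (x + y) + (d - a) = 0 := by
    have hne : x - y ≠ 0 := sub_ne_zero.mpr hxy
    have hh : (x - y) * (c * (x + y) + (d - a)) = 0 := by linear_combination hx - hy
    rcases mul_eq_zero.mp hh with h' | h'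
    · exact absurd h' hne
    · exact h'
  have h2 : c * (x + z) + (d - a) = 0 := by
    have hne : x - z ≠ 0 := sub_ne_zero.mpr hxz
    have hh : (x - z) * (c * (x + z) + (d - a)) = 0 := by linear_combination hx - hz
    rcases mul_eq_zero.mp hh with h' | h'
    · exact absurd h' hne
    · exact h'
  have hc : c = 0 := by
    have hne : y - z ≠ 0 := sub_ne_zero.mpr hyz
    have hh : (y - z) * c = 0 := by linear_combination h1 - h2
    rcases mul_eq_zero.mp hh with h' | h'
    · exact absurd h' hne
    · exact h'
  have had : a = d := by
    have hda : d - a = 0 := by linear_combination h1 - (x + y) * hc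
    exact (sub_eq_zero.mp hda).symm
  exact ⟨hc, by linear_combination -hx + x ^ 2 * hc - x * had, had⟩

/-- The predicate: the permutation `g` of the root set is induced by a fractional linear map. -/
private def MobP (R : Finset F) (g : Equiv.Perm {x // x ∈ R}) : Prop :=
  ∃ a b c d : F, a * d - b * c ≠ 0 ∧
    ∀ α : {x // x ∈ R}, c * (α : F) + d ≠ 0 ∧
      (a * (α : F) + b) / (c * (α : F) + d) = ((g α : {x // x ∈ R}) : F)

private lemma mobP_mul {R : Finset F} {g1 g2 : Equiv.Perm {x // x ∈ R}}
    (h1 : MobP R g1) (h2 : MobP R g2) : MobP R (g1 * g2) := by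
  obtain ⟨a1, b1, c1, d1, hd1, H1⟩ := h1
  obtain ⟨a2, b2, c2, d2, hd2, H2⟩ := h2
  refine ⟨a1 * a2 + b1 * c2, a1 * b2 + b1 * d2, c1 * a2 + d1 * c2, c1 * b2 + d1 * d2,
    fun H => mul_ne_zero hd1 hd2 (by linear_combination H), fun α => ?_⟩
  obtain ⟨hden2, hval2⟩ := H2 α
  obtain ⟨hden1, hval1⟩ := H1 (g2 α)
  have hcross2 : a2 * (α : F) + b2 = ((g2 α : {x // x ∈ R}) : F) * (c2 * (α : F) + d2) :=
    (div_eq_iff hden2).mp hval2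
  have key : (c1 * a2 + d1 * c2) * (α : F) + (c1 * b2 + d1 * d2)
      = (c1 * ((g2 α : {x // x ∈ R}) : F) + d1) * (c2 * (α : F) + d2) := by
    linear_combination c1 * hcross2
  have key2 : (a1 * a2 + b1 * c2) * (α : F) + (a1 * b2 + b1 * d2)
      = (a1 * ((g2 α : {x // x ∈ R}) : F) + b1) * (c2 * (α : F) + d2) := by
    linear_combination a1 * hcross2
  constructor
  · rw [key]; exact mul_ne_zero hden1 hden2
  · rw [key, key2, mul_div_mul_right _ _ hden2, Equiv.Perm.mul_apply]
    exact hval1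

private lemma mobP_inv {R : Finset F} {g : Equiv.Perm {x // x ∈ R}}
    (h : MobP R g) : MobP R g⁻¹ := by
  obtain ⟨a, b, c, d, hd, H⟩ := h
  refine ⟨d, -b, -c, a, fun H0 => hd (by linear_combination H0), fun α => ?_⟩
  obtain ⟨hden, hval⟩ := H (g⁻¹ α)
  rw [Equiv.Perm.apply_inv_self] at hval
  have hcross : a * ((g⁻¹ α : {x // x ∈ R}) : F) + b
      = (α : F) * (c * ((g⁻¹ α : {x // x ∈ R}) : F) + d) := (div_eq_iff hden).mp hval
  have keyden : (-c * (α : F) + a) * (c * ((g⁻¹ α : {x // x ∈ R}) : F) + d) = a * d - b * c := by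
    linear_combination c * hcross
  have hdenne : -c * (α : F) + a ≠ 0 := fun h0 => hd (by rw [← keyden, h0, zero_mul])
  refine ⟨hdenne, ?_⟩
  rw [div_eq_iff hdenne]
  linear_combination -hcross

private lemma mobP_eq_one_of_fixed3 {R : Finset F} {g : Equiv.Perm {x // x ∈ R}}
    (h : MobP R g) {x y z : {x // x ∈ R}} (hxy : x ≠ y) (hxz : x ≠ z) (hyz : y ≠ z)
    (hfx : g x = x) (hfy : g y = y) (hfz : g z = z) : g = 1 := by
  obtain ⟨a, b, c, d, hd, H⟩ := h
  have quad : ∀ w : {x // x ∈ R}, g w = w →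
      c * (w : F) ^ 2 + (d - a) * (w : F) - b = 0 := by
    intro w hw
    obtain ⟨hden, hval⟩ := H w
    rw [hw] at hval
    have hcross := (div_eq_iff hden).mp hval
    linear_combination -hcross
  obtain ⟨hc, hb, had⟩ := quad_roots3 (c := c) (d := d) (a := a) (b := b)
    (fun hh => hxy (Subtype.ext hh)) (fun hh => hxz (Subtype.ext hh))
    (fun hh => hyz (Subtype.ext hh)) (quad x hfx) (quad y hfy) (quad z hfz)
  have hdne : d ≠ 0 := by
    intro h0
    exact hd (by rw [hc, h0]; ring)
  apply Equiv.ext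
  intro w
  obtain ⟨hden, hval⟩ := H w
  rw [had, hb, hc] at hval
  have : (d * (w : F) + 0) / (0 * (w : F) + d) = (w : F) := by
    rw [add_zero, zero_mul, zero_add]
    exact mul_div_cancel_left₀ _ hdne
  rw [this] at hval
  simp only [Equiv.Perm.one_apply]
  exact (Subtype.ext hval.symm)

private lemma mobP_agree3 {R : Finset F} {g1 g2 : Equiv.Perm {x // x ∈ R}}
    (h1 : MobP R g1) (h2 : MobP R g2) {x y z : {x // x ∈ R}}
    (hxy : x ≠ y) (hxz : x ≠ z) (hyz : y ≠ z)
    (hax : g1 x = g2 x) (hay : g1 y = g2 y) (haz : g1 z = g2 z) : g1 = g2 := by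
  have hg : MobP R (g1 * g2⁻¹) := mobP_mul h1 (mobP_inv h2)
  have hfix : ∀ w : {x // x ∈ R}, g1 w = g2 w → (g1 * g2⁻¹) (g2 w) = g2 w := by
    intro w hw
    simp only [Equiv.Perm.mul_apply, Equiv.Perm.inv_apply_self]
    exact hw
  have h3 : g1 * g2⁻¹ = 1 :=
    mobP_eq_one_of_fixed3 hg (fun hh => hxy (g2.injective hh))
      (fun hh => hxz (g2.injective hh)) (fun hh => hyz (g2.injective hh))
      (hfix x hax) (hfix y hay) (hfix z haz)
  exact mul_inv_eq_one.mp h3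

/- Helpers on 3-cycles written as `swap u w * swap u v` (this maps u ↦ v ↦ w ↦ u). -/
private lemma c3_u {α : Type*} [DecidableEq α] {u v w : α} (hvu : v ≠ u) (hvw : v ≠ w) :
    (Equiv.swap u w * Equiv.swap u v) u = v := by
  rw [Equiv.Perm.mul_apply, Equiv.swap_apply_left, Equiv.swap_apply_of_ne_of_ne hvu hvw]

private lemma c3_v {α : Type*} [DecidableEq α] (u v w : α) :
    (Equiv.swap u w * Equiv.swap u v) v = w := by
  rw [Equiv.Perm.mul_apply, Equiv.swap_apply_right, Equiv.swap_apply_left]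

private lemma c3_w {α : Type*} [DecidableEq α] {u v w : α} (hwu : w ≠ u) (hwv : w ≠ v) :
    (Equiv.swap u w * Equiv.swap u v) w = u := by
  rw [Equiv.Perm.mul_apply, Equiv.swap_apply_of_ne_of_ne hwu hwv, Equiv.swap_apply_right]

private lemma c3_fix {α : Type*} [DecidableEq α] {u v w x : α}
    (hxu : x ≠ u) (hxv : x ≠ v) (hxw : x ≠ w) :
    (Equiv.swap u w * Equiv.swap u v) x = x := by
  rw [Equiv.Perm.mul_apply, Equiv.swap_apply_of_ne_of_ne hxu hxv,
    Equiv.swap_apply_of_ne_of_ne hxu hxw]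

private lemma c3_sign {α : Type*} [DecidableEq α] [Fintype α] {u v w : α}
    (huv : u ≠ v) (huw : u ≠ w) :
    Equiv.Perm.sign (Equiv.swap u w * Equiv.swap u v) = 1 := by
  rw [map_mul, Equiv.Perm.sign_swap huw, Equiv.Perm.sign_swap huv]
  decide

end MobiusAux

theorem no_nontrivial_fractional_linear_stabilizer_of_roots
    {K : Type*} [Field K] (n : ℕ) (hn : 7 ≤ n)
    (h : Polynomial K) (hirr : Irreducible h) (hsep : h.Separable)
    (hdeg : h.natDegree = n - 1)
    (R : Finset (AlgebraicClosure K))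
    (hR : ∀ x : AlgebraicClosure K, x ∈ R ↔ Polynomial.aeval x h = 0)
    (hgal : ∀ π : Equiv.Perm {x // x ∈ R}, Equiv.Perm.sign π = 1 →
      ∃ σ : AlgebraicClosure K ≃ₐ[K] AlgebraicClosure K,
        ∀ α : {x // x ∈ R}, σ (α : AlgebraicClosure K) = (π α : AlgebraicClosure K))
    (a b c d : AlgebraicClosure K) (hdet : a * d - b * c ≠ 0)
    (hmap : ∀ α ∈ R, c * α + d ≠ 0 ∧ (a * α + b) / (c * α + d) ∈ R) :
    c = 0 ∧ b = 0 ∧ a = d := by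
  -- cardinality of the root set
  have hne0 : h ≠ 0 := hirr.ne_zero
  have hsplits : Polynomial.Splits (h.map (algebraMap K (AlgebraicClosure K))) :=
    IsAlgClosed.splits _
  have hiff : ∀ x : AlgebraicClosure K, x ∈ R ↔ x ∈ h.rootSet (AlgebraicClosure K) := by
    intro x
    rw [hR x, Polynomial.mem_rootSet]
    exact ⟨fun hx => ⟨hne0, hx⟩, fun hx => hx.2⟩
  have hcard : Fintype.card {x // x ∈ R} = n - 1 := by
    rw [Fintype.card_congr (Equiv.subtypeEquivRight hiff), ← hdeg]
    exact Polynomial.card_rootSet_eq_natDegree hsep hsplits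
  have hpick : ∀ l : List {x // x ∈ R}, l.length ≤ 5 → ∃ x, x ∉ l := by
    intro l hl
    by_contra hcon
    push_neg at hcon
    have hsub : (Finset.univ : Finset {x // x ∈ R}) ⊆ l.toFinset :=
      fun x _ => List.mem_toFinset.mpr (hcon x)
    have h1 : Fintype.card {x // x ∈ R} ≤ l.toFinset.card := by
      simpa using Finset.card_le_card hsub
    have h2 : l.toFinset.card ≤ l.length := l.toFinset_card_le
    omega
  -- the induced permutation π of the root set
  obtain ⟨π, hπfun⟩ : ∃ π : Equiv.Perm {x // x ∈ R},
      ∀ α : {x // x ∈ R},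
        ((π α : {x // x ∈ R}) : AlgebraicClosure K)
          = (a * (α : AlgebraicClosure K) + b) / (c * (α : AlgebraicClosure K) + d) := by
    have hinj : Function.Injective
        (fun α : {x // x ∈ R} =>
          (⟨(a * (α : AlgebraicClosure K) + b) / (c * (α : AlgebraicClosure K) + d),
            (hmap _ α.2).2⟩ : {x // x ∈ R})) := by
      intro α β hfe
      have hdα := (hmap _ α.2).1
      have hdβ := (hmap _ β.2).1
      have hvv : (a * (α : AlgebraicClosure K) + b) / (c * (α : AlgebraicClosure K) + d)
          = (a * (β : AlgebraicClosure K) + b) / (c * (β : AlgebraicClosure K) + d) :=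
        congrArg Subtype.val hfe
      rw [div_eq_div_iff hdα hdβ] at hvv
      have hz : (a * d - b * c) * ((α : AlgebraicClosure K) - (β : AlgebraicClosure K)) = 0 := by
        linear_combination hvv
      rcases mul_eq_zero.mp hz with h' | h'
      · exact absurd h' hdet
      · exact Subtype.ext (sub_eq_zero.mp h')
    exact ⟨Equiv.ofBijective _ (Finite.injective_iff_bijective.mp hinj), fun α => rfl⟩
  have hπmob : MobP R π := ⟨a, b, c, d, hdet, fun α => ⟨(hmap _ α.2).1, (hπfun α).symm⟩⟩
  -- conjugation by even permutations preserves MobP, via the Galois action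
  have hconj : ∀ τ g : Equiv.Perm {x // x ∈ R}, Equiv.Perm.sign τ = 1 → MobP R g →
      MobP R (τ * g * τ⁻¹) := by
    intro τ g hsgn hg
    obtain ⟨σ, hσ⟩ := hgal τ hsgn
    obtain ⟨a', b', c', d', hd', H⟩ := hg
    refine ⟨σ a', σ b', σ c', σ d', ?_, ?_⟩
    · have hh : σ a' * σ d' - σ b' * σ c' = σ (a' * d' - b' * c') := by
        rw [map_sub, map_mul, map_mul]
      rw [hh]
      exact fun h0 => hd' (σ.injective (by rw [h0, map_zero]))
    · intro α
      obtain ⟨hden, hval⟩ := H (τ⁻¹ α)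
      have hσβ : σ ((τ⁻¹ α : {x // x ∈ R}) : AlgebraicClosure K) = (α : AlgebraicClosure K) := by
        rw [hσ (τ⁻¹ α), Equiv.Perm.apply_inv_self]
      have hdiv : σ ((a' * ((τ⁻¹ α : {x // x ∈ R}) : AlgebraicClosure K) + b')
            / (c' * ((τ⁻¹ α : {x // x ∈ R}) : AlgebraicClosure K) + d'))
          = (σ a' * (α : AlgebraicClosure K) + σ b')
            / (σ c' * (α : AlgebraicClosure K) + σ d') := by
        rw [map_div₀, map_add, map_mul, map_add, map_mul, hσβ]
      constructor
      · have hh : σ c' * (α : AlgebraicClosure K) + σ d'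
            = σ (c' * ((τ⁻¹ α : {x // x ∈ R}) : AlgebraicClosure K) + d') := by
          rw [map_add, map_mul, hσβ]
        rw [hh]
        exact fun h0 => hden (σ.injective (by rw [h0, map_zero]))
      · rw [← hdiv, hval, hσ (g (τ⁻¹ α))]
        congr 1
  -- the key "two disjoint 3-cycles" handler
  have handler : ∀ (g : Equiv.Perm {x // x ∈ R}) (A B C A' B' C' : {x // x ∈ R}),
      MobP R g →
      A ≠ B → A ≠ C → A ≠ A' → A ≠ B' → A ≠ C' →
      B ≠ C → B ≠ A' → B ≠ B' → B ≠ C' →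
      C ≠ A' → C ≠ B' → C ≠ C' →
      A' ≠ B' → A' ≠ C' → B' ≠ C' →
      g A = B → g B = C → g C = A → g A' = B' → g B' = C' → g C' = A' → False := by
    intro g A B C A' B' C' hg hAB hAC hAA' hAB' hAC' hBC hBA' hBB' hBC' hCA' hCB' hCC'
      hA'B' hA'C' hB'C' hgA hgB hgC hgA' hgB' hgC'
    set τ0 : Equiv.Perm {x // x ∈ R} :=
      Equiv.swap A A' * (Equiv.swap B C' * (Equiv.swap B C * Equiv.swap B B')) with hτ0
    have hsgn : Equiv.Perm.sign τ0 = 1 := by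
      rw [hτ0, map_mul, map_mul, map_mul, Equiv.Perm.sign_swap hAA', Equiv.Perm.sign_swap hBC',
        Equiv.Perm.sign_swap hBC, Equiv.Perm.sign_swap hBB']
      decide
    have tA : τ0 A = A' := by
      rw [hτ0]
      simp only [Equiv.Perm.mul_apply]
      rw [Equiv.swap_apply_of_ne_of_ne hAB hAB', Equiv.swap_apply_of_ne_of_ne hAB hAC,
        Equiv.swap_apply_of_ne_of_ne hAB hAC', Equiv.swap_apply_left]
    have tA' : τ0 A' = A := by
      rw [hτ0]
      simp only [Equiv.Perm.mul_apply]
      rw [Equiv.swap_apply_of_ne_of_ne hBA'.symm hA'B',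
        Equiv.swap_apply_of_ne_of_ne hBA'.symm hCA'.symm,
        Equiv.swap_apply_of_ne_of_ne hBA'.symm hA'C', Equiv.swap_apply_right]
    have tB : τ0 B = B' := by
      rw [hτ0]
      simp only [Equiv.Perm.mul_apply]
      rw [Equiv.swap_apply_left, Equiv.swap_apply_of_ne_of_ne hBB'.symm hCB'.symm,
        Equiv.swap_apply_of_ne_of_ne hBB'.symm hB'C',
        Equiv.swap_apply_of_ne_of_ne hAB'.symm hA'B'.symm]
    have tB' : τ0 B' = C := by
      rw [hτ0]
      simp only [Equiv.Perm.mul_apply]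
      rw [Equiv.swap_apply_right, Equiv.swap_apply_left,
        Equiv.swap_apply_of_ne_of_ne hBC.symm hCC',
        Equiv.swap_apply_of_ne_of_ne hAC.symm hCA']
    have tC : τ0 C = C' := by
      rw [hτ0]
      simp only [Equiv.Perm.mul_apply]
      rw [Equiv.swap_apply_of_ne_of_ne hBC.symm hCB', Equiv.swap_apply_right,
        Equiv.swap_apply_left, Equiv.swap_apply_of_ne_of_ne hAC'.symm hA'C'.symm]
    have tC' : τ0 C' = B := by
      rw [hτ0]
      simp only [Equiv.Perm.mul_apply]
      rw [Equiv.swap_apply_of_ne_of_ne hBC'.symm hB'C'.symm,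
        Equiv.swap_apply_of_ne_of_ne hBC'.symm hCC'.symm, Equiv.swap_apply_right,
        Equiv.swap_apply_of_ne_of_ne hAB.symm hBA']
    have iA : τ0⁻¹ A = A' := by rw [← tA', Equiv.Perm.inv_apply_self]
    have iB : τ0⁻¹ B = C' := by rw [← tC', Equiv.Perm.inv_apply_self]
    have iB' : τ0⁻¹ B' = B := by rw [← tB, Equiv.Perm.inv_apply_self]
    have iC : τ0⁻¹ C = B' := by rw [← tB', Equiv.Perm.inv_apply_self]
    have hg2mob : MobP R ((τ0 * g * τ0⁻¹) * g) := mobP_mul (hconj τ0 g hsgn hg) hg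
    have happ : ∀ x : {x // x ∈ R}, ((τ0 * g * τ0⁻¹) * g) x = τ0 (g (τ0⁻¹ (g x))) := by
      intro x
      simp [Equiv.Perm.mul_apply]
    have f2A : ((τ0 * g * τ0⁻¹) * g) A = A := by rw [happ, hgA, iB, hgC', tA']
    have f2B : ((τ0 * g * τ0⁻¹) * g) B = B := by rw [happ, hgB, iC, hgB', tC']
    have f2C : ((τ0 * g * τ0⁻¹) * g) C = C := by rw [happ, hgC, iA, hgA', tB']
    have f2A' : ((τ0 * g * τ0⁻¹) * g) A' = C' := by rw [happ, hgA', iB', hgB, tC]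
    have hone := mobP_eq_one_of_fixed3 hg2mob hAB hAC hBC f2A f2B f2C
    rw [hone] at f2A'
    simp only [Equiv.Perm.one_apply] at f2A'
    exact hA'C' f2A'
  -- main step : π = 1
  have hmain : π = 1 := by
    by_contra hne1
    have hmoved : ∃ p, π p ≠ p := by
      by_contra hcall
      push_neg at hcall
      exact hne1 (Equiv.ext fun x => by simp [hcall x])
    by_cases hc1 : ∃ p, π p ≠ p ∧ π (π p) ≠ p ∧ π (π (π p)) ≠ p
    · -- a "long" orbit : agreement trick with the 3-cycle (p, πp, π²p)
      obtain ⟨p, hp1, hp2, hp3⟩ := hc1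
      obtain ⟨q, hq⟩ : ∃ y, π p = y := ⟨_, rfl⟩
      obtain ⟨r, hr⟩ : ∃ y, π q = y := ⟨_, rfl⟩
      rw [hq] at hp1 hp2 hp3
      rw [hr] at hp2 hp3
      -- hp1 : q ≠ p, hp2 : r ≠ p, hp3 : π r ≠ p
      have hrq : r ≠ q := fun hh => hp1 (π.injective (by rw [hr, hh, hq]))
      obtain ⟨x1, hx1⟩ := hpick [p, q, r, π⁻¹ p] (by simp)
      obtain ⟨x2, hx2⟩ := hpick [x1, p, q, r, π⁻¹ p] (by simp)
      simp only [List.mem_cons, List.not_mem_nil, or_false, not_or] at hx1 hx2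
      obtain ⟨hx1p, hx1q, hx1r, hx1s⟩ := hx1
      obtain ⟨hx21, hx2p, hx2q, hx2r, hx2s⟩ := hx2
      set τ : Equiv.Perm {x // x ∈ R} := Equiv.swap p r * Equiv.swap p q with hτ
      have hsgn : Equiv.Perm.sign τ = 1 := c3_sign hp1.symm hp2.symm
      have tp : τ p = q := c3_u hp1 hrq.symm
      have tq : τ q = r := c3_v p q r
      have tr : τ r = p := c3_w hp2 hrq
      have iq : τ⁻¹ q = p := by rw [← tp, Equiv.Perm.inv_apply_self]
      have ir : τ⁻¹ r = q := by rw [← tq, Equiv.Perm.inv_apply_self]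
      have hcmob : MobP R (τ * π * τ⁻¹) := hconj τ π hsgn hπmob
      have happ : ∀ x : {x // x ∈ R}, (τ * π * τ⁻¹) x = τ (π (τ⁻¹ x)) := by
        intro x; simp [Equiv.Perm.mul_apply]
      have agreeq : (τ * π * τ⁻¹) q = π q := by rw [happ, iq, hq, tq, hr]
      have hπavoid : ∀ x : {x // x ∈ R}, x ≠ p → x ≠ q → x ≠ r → x ≠ π⁻¹ p →
          (τ * π * τ⁻¹) x = π x := by
        intro x hxp hxq hxr hxs
        have hfx : τ x = x := c3_fix hxp hxq hxr
        have hix : τ⁻¹ x = x := by rw [← hfx, Equiv.Perm.inv_apply_self, hfx]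
        have hπxp : π x ≠ p := by
          intro hh
          apply hxs
          have := congrArg (fun y => π⁻¹ y) hh
          simpa [Equiv.Perm.inv_apply_self] using this
        have hπxq : π x ≠ q := fun hh => hxp (π.injective (hh.trans hq.symm))
        have hπxr : π x ≠ r := fun hh => hxq (π.injective (hh.trans hr.symm))
        rw [happ, hix]
        exact c3_fix hπxp hπxq hπxr
      have agree1 : (τ * π * τ⁻¹) x1 = π x1 := hπavoid x1 hx1p hx1q hx1r hx1s
      have agree2 : (τ * π * τ⁻¹) x2 = π x2 := hπavoid x2 hx2p hx2q hx2r hx2s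
      have hceq : (τ * π * τ⁻¹) = π :=
        mobP_agree3 hcmob hπmob (Ne.symm hx21) hx1q hx2q agree1 agree2 agreeq
      have hcr : (τ * π * τ⁻¹) r = p := by rw [happ, ir, hr, tr]
      rw [hceq] at hcr
      exact hp3 hcr
    · push_neg at hc1
      by_cases hc3 : ∃ p, π p ≠ p ∧ π (π p) ≠ p
      · -- a 3-cycle exists
        obtain ⟨p, hp1, hp2⟩ := hc3
        have hp3 : π (π (π p)) = p := hc1 p hp1 hp2
        obtain ⟨q, hq⟩ : ∃ y, π p = y := ⟨_, rfl⟩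
        obtain ⟨r, hr⟩ : ∃ y, π q = y := ⟨_, rfl⟩
        rw [hq] at hp1 hp2 hp3
        rw [hr] at hp2 hp3
        -- hp1 : q ≠ p, hp2 : r ≠ p, hp3 : π r = p
        have hrq : r ≠ q := fun hh => hp1 (π.injective (by rw [hr, hh, hq]))
        by_cases hsec : ∃ p', p' ≠ p ∧ p' ≠ q ∧ p' ≠ r ∧ π p' ≠ p' ∧ π (π p') ≠ p'
        · -- a second, disjoint 3-cycle
          obtain ⟨p', hp'p, hp'q, hp'r, hp'1, hp'2⟩ := hsec
          have hp'3 : π (π (π p')) = p' := hc1 p' hp'1 hp'2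
          obtain ⟨q', hq'⟩ : ∃ y, π p' = y := ⟨_, rfl⟩
          obtain ⟨r', hr'⟩ : ∃ y, π q' = y := ⟨_, rfl⟩
          rw [hq'] at hp'1 hp'2 hp'3
          rw [hr'] at hp'2 hp'3
          have hr'q' : r' ≠ q' := fun hh => hp'1 (π.injective (by rw [hr', hh, hq']))
          have hq'p : q' ≠ p := fun hh => hp'r (π.injective (by rw [hq', hh, hp3]))
          have hq'q : q' ≠ q := fun hh => hp'p (π.injective (by rw [hq', hh, hq]))
          have hq'r : q' ≠ r := fun hh => hp'q (π.injective (by rw [hq', hh, hr]))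
          have hr'p : r' ≠ p := fun hh => hq'r (π.injective (by rw [hr', hh, hp3]))
          have hr'q : r' ≠ q := fun hh => hq'p (π.injective (by rw [hr', hh, hq]))
          have hr'r : r' ≠ r := fun hh => hq'q (π.injective (by rw [hr', hh, hr]))
          exact handler π p q r p' q' r' hπmob hp1.symm hp2.symm hp'p.symm hq'p.symm hr'p.symm
            hrq.symm hp'q.symm hq'q.symm hr'q.symm hp'r.symm hq'r.symm hr'r.symm
            hp'1.symm hp'2.symm hr'q'.symm hq hr hp3 hq' hr' hp'3
        · -- no second 3-cycle : π² fixes everything outside {p,q,r}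
          push_neg at hsec
          obtain ⟨x1, hx1⟩ := hpick [p, q, r] (by simp)
          obtain ⟨x2, hx2⟩ := hpick [x1, p, q, r] (by simp)
          obtain ⟨x3, hx3⟩ := hpick [x2, x1, p, q, r] (by simp)
          simp only [List.mem_cons, List.not_mem_nil, or_false, not_or] at hx1 hx2 hx3
          obtain ⟨hx1p, hx1q, hx1r⟩ := hx1
          obtain ⟨hx21, hx2p, hx2q, hx2r⟩ := hx2
          obtain ⟨hx32, hx31, hx3p, hx3q, hx3r⟩ := hx3
          have hfix : ∀ x : {x // x ∈ R}, x ≠ p → x ≠ q → x ≠ r → (π * π) x = x := by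
            intro x h1' h2' h3'
            by_cases hxx : π x = x
            · simp [Equiv.Perm.mul_apply, hxx]
            · simp only [Equiv.Perm.mul_apply]
              exact hsec x h1' h2' h3' hxx
          have h2mob : MobP R (π * π) := mobP_mul hπmob hπmob
          have hone := mobP_eq_one_of_fixed3 h2mob (Ne.symm hx21) (Ne.symm hx31) (Ne.symm hx32)
            (hfix x1 hx1p hx1q hx1r) (hfix x2 hx2p hx2q hx2r) (hfix x3 hx3p hx3q hx3r)
          have hpp : (π * π) p = r := by simp [Equiv.Perm.mul_apply, hq, hr]
          rw [hone] at hpp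
          simp only [Equiv.Perm.one_apply] at hpp
          exact hp2 hpp.symm
      · -- π is an involution
        push_neg at hc3
        by_cases hfz : ∃ z, π z = z
        · -- an involution with a fixed point and a 2-cycle
          obtain ⟨z, hz⟩ := hfz
          obtain ⟨p, hp1⟩ := hmoved
          obtain ⟨q, hq⟩ : ∃ y, π p = y := ⟨_, rfl⟩
          rw [hq] at hp1
          have hqp : π q = p := by
            have := hc3 p (by rw [hq]; exact hp1)
            rwa [hq] at this
          have hzp : z ≠ p := fun hh => hp1 (by rw [hh] at hz; exact hq.symm.trans hz)
          have hzq : z ≠ q := fun hh => hp1 (by rw [hh] at hz; exact hz.symm.trans hqp)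
          obtain ⟨x1, hx1⟩ := hpick [p, q, z] (by simp)
          obtain ⟨x2, hx2⟩ := hpick [x1, p, q, z] (by simp)
          obtain ⟨x3, hx3⟩ := hpick [x2, x1, p, q, z] (by simp)
          simp only [List.mem_cons, List.not_mem_nil, or_false, not_or] at hx1 hx2 hx3
          obtain ⟨hx1p, hx1q, hx1z⟩ := hx1
          obtain ⟨hx21, hx2p, hx2q, hx2z⟩ := hx2
          obtain ⟨hx32, hx31, hx3p, hx3q, hx3z⟩ := hx3
          set τ : Equiv.Perm {x // x ∈ R} := Equiv.swap p z * Equiv.swap p q with hτ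
          have hsgn : Equiv.Perm.sign τ = 1 := c3_sign hp1.symm hzp.symm
          have tp : τ p = q := c3_u hp1 hzq.symm
          have tz : τ z = p := c3_w hzp hzq
          have iz : τ⁻¹ p = z := by rw [← tz, Equiv.Perm.inv_apply_self]
          have hcmob : MobP R (τ * π * τ⁻¹) := hconj τ π hsgn hπmob
          have happ : ∀ x : {x // x ∈ R}, (τ * π * τ⁻¹) x = τ (π (τ⁻¹ x)) := by
            intro x; simp [Equiv.Perm.mul_apply]
          have hπavoid : ∀ x : {x // x ∈ R}, x ≠ p → x ≠ q → x ≠ z →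
              (τ * π * τ⁻¹) x = π x := by
            intro x hxp hxq hxz
            have hfx : τ x = x := c3_fix hxp hxq hxz
            have hix : τ⁻¹ x = x := by rw [← hfx, Equiv.Perm.inv_apply_self, hfx]
            have hπxp : π x ≠ p := fun hh => hxq (π.injective (hh.trans hqp.symm))
            have hπxq : π x ≠ q := fun hh => hxp (π.injective (hh.trans hq.symm))
            have hπxz : π x ≠ z := fun hh => hxz (π.injective (hh.trans hz.symm))
            rw [happ, hix]
            exact c3_fix hπxp hπxq hπxz
          have hceq : (τ * π * τ⁻¹) = π :=
            mobP_agree3 hcmob hπmob (Ne.symm hx21) (Ne.symm hx31) (Ne.symm hx32)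
              (hπavoid x1 hx1p hx1q hx1z) (hπavoid x2 hx2p hx2q hx2z)
              (hπavoid x3 hx3p hx3q hx3z)
          have hcp : (τ * π * τ⁻¹) p = p := by rw [happ, iz, hz, tz]
          rw [hceq] at hcp
          exact hp1 (hq.symm.trans hcp)
        · -- fixed-point-free involution : build two disjoint 3-cycles
          push_neg at hfz
          have hinv : ∀ x, π (π x) = x := fun x => hc3 x (hfz x)
          obtain ⟨p1, -⟩ := hmoved
          obtain ⟨q1, hq1⟩ : ∃ y, π p1 = y := ⟨_, rfl⟩
          have hq1p1 : π q1 = p1 := by rw [← hq1, hinv]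
          have hq1ne : q1 ≠ p1 := by rw [← hq1]; exact hfz p1
          obtain ⟨p2, hp2mem⟩ := hpick [p1, q1] (by simp)
          simp only [List.mem_cons, List.not_mem_nil, or_false, not_or] at hp2mem
          obtain ⟨hp2p1, hp2q1⟩ := hp2mem
          obtain ⟨q2, hq2⟩ : ∃ y, π p2 = y := ⟨_, rfl⟩
          have hq2p2' : π q2 = p2 := by rw [← hq2, hinv]
          have hq2p2 : q2 ≠ p2 := by rw [← hq2]; exact hfz p2
          have hq2p1 : q2 ≠ p1 := fun hh => hp2q1 (π.injective (by rw [hq2, hh, hq1p1]))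
          have hq2q1 : q2 ≠ q1 := fun hh => hp2p1 (π.injective (by rw [hq2, hh, hq1]))
          obtain ⟨p3, hp3mem⟩ := hpick [p1, q1, p2, q2] (by simp)
          simp only [List.mem_cons, List.not_mem_nil, or_false, not_or] at hp3mem
          obtain ⟨hp3p1, hp3q1, hp3p2, hp3q2⟩ := hp3mem
          obtain ⟨q3, hq3⟩ : ∃ y, π p3 = y := ⟨_, rfl⟩
          have hq3p3' : π q3 = p3 := by rw [← hq3, hinv]
          have hq3p3 : q3 ≠ p3 := by rw [← hq3]; exact hfz p3
          have hq3p1 : q3 ≠ p1 := fun hh => hp3q1 (π.injective (by rw [hq3, hh, hq1p1]))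
          have hq3q1 : q3 ≠ q1 := fun hh => hp3p1 (π.injective (by rw [hq3, hh, hq1]))
          have hq3p2 : q3 ≠ p2 := fun hh => hp3q2 (π.injective (by rw [hq3, hh, hq2p2']))
          have hq3q2 : q3 ≠ q2 := fun hh => hp3p2 (π.injective (by rw [hq3, hh, hq2]))
          set τ : Equiv.Perm {x // x ∈ R} := Equiv.swap p1 p3 * Equiv.swap p1 p2 with hτ
          have hsgn : Equiv.Perm.sign τ = 1 := c3_sign (Ne.symm hp2p1) (Ne.symm hp3p1)
          have tp1 : τ p1 = p2 := c3_u hp2p1 (fun hh => hp3p2 hh.symm)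
          have tp2 : τ p2 = p3 := c3_v p1 p2 p3
          have tp3 : τ p3 = p1 := c3_w hp3p1 hp3p2
          have tq1 : τ q1 = q1 :=
            c3_fix hq1ne (fun hh => hp2q1 hh.symm) (fun hh => hp3q1 hh.symm)
          have tq2 : τ q2 = q2 := c3_fix hq2p1 hq2p2 (fun hh => hp3q2 hh.symm)
          have tq3 : τ q3 = q3 := c3_fix hq3p1 hq3p2 hq3p3
          have ip1 : τ⁻¹ p1 = p3 := by rw [← tp3, Equiv.Perm.inv_apply_self]
          have ip2 : τ⁻¹ p2 = p1 := by rw [← tp1, Equiv.Perm.inv_apply_self]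
          have ip3 : τ⁻¹ p3 = p2 := by rw [← tp2, Equiv.Perm.inv_apply_self]
          have iq1 : τ⁻¹ q1 = q1 := by rw [← tq1, Equiv.Perm.inv_apply_self, tq1]
          have iq2 : τ⁻¹ q2 = q2 := by rw [← tq2, Equiv.Perm.inv_apply_self, tq2]
          have iq3 : τ⁻¹ q3 = q3 := by rw [← tq3, Equiv.Perm.inv_apply_self, tq3]
          have hgmob : MobP R ((τ * π * τ⁻¹) * π) := mobP_mul (hconj τ π hsgn hπmob) hπmob
          have happ : ∀ x : {x // x ∈ R}, ((τ * π * τ⁻¹) * π) x = τ (π (τ⁻¹ (π x))) := by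
            intro x; simp [Equiv.Perm.mul_apply]
          have gp1 : ((τ * π * τ⁻¹) * π) p1 = p2 := by rw [happ, hq1, iq1, hq1p1, tp1]
          have gp2 : ((τ * π * τ⁻¹) * π) p2 = p3 := by rw [happ, hq2, iq2, hq2p2', tp2]
          have gp3 : ((τ * π * τ⁻¹) * π) p3 = p1 := by rw [happ, hq3, iq3, hq3p3', tp3]
          have gq1 : ((τ * π * τ⁻¹) * π) q1 = q3 := by rw [happ, hq1p1, ip1, hq3, tq3]
          have gq3 : ((τ * π * τ⁻¹) * π) q3 = q2 := by rw [happ, hq3p3', ip3, hq2, tq2]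
          have gq2 : ((τ * π * τ⁻¹) * π) q2 = q1 := by rw [happ, hq2p2', ip2, hq1, tq1]
          exact handler ((τ * π * τ⁻¹) * π) p1 p2 p3 q1 q3 q2 hgmob
            (Ne.symm hp2p1) (Ne.symm hp3p1) hq1ne.symm hq3p1.symm hq2p1.symm
            (Ne.symm hp3p2) hp2q1 hq3p2.symm hq2p2.symm
            hp3q1 hq3p3.symm hp3q2
            hq3q1.symm hq2q1.symm hq3q2
            gp1 gp2 gp3 gq1 gq3 gq2
  -- endgame : π = 1 gives three distinct fixed points of the Möbius map
  obtain ⟨y1, hy1⟩ := hpick [] (by simp)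
  obtain ⟨y2, hy2⟩ := hpick [y1] (by simp)
  obtain ⟨y3, hy3⟩ := hpick [y2, y1] (by simp)
  simp only [List.mem_cons, List.not_mem_nil, or_false, not_or] at hy2 hy3
  obtain ⟨hy32, hy31⟩ := hy3
  have hvals : ∀ α : {x // x ∈ R},
      (a * (α : AlgebraicClosure K) + b) / (c * (α : AlgebraicClosure K) + d)
        = (α : AlgebraicClosure K) := by
    intro α
    rw [← hπfun α, hmain]
    simp
  have quadf : ∀ α : {x // x ∈ R},
      c * (α : AlgebraicClosure K) ^ 2 + (d - a) * (α : AlgebraicClosure K) - b = 0 := by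
    intro α
    have hden := (hmap _ α.2).1
    have hcross := (div_eq_iff hden).mp (hvals α)
    linear_combination -hcross
  exact quad_roots3 (fun hh => hy2 (Subtype.ext hh).symm)
    (fun hh => hy31 (Subtype.ext hh).symm) (fun hh => hy32 (Subtype.ext hh).symm)
    (quadf y1) (quadf y2) (quadf y3)
end
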